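/- Let R be a ring, A an R-algebra, and I ⊆ A an ideal such that A, A/I, and I^k/I^{k+1} are flat over R for all k ≥ 1. Then A/I^k is flat over R for all k ≥ 1. Moreover, if (R, 𝔪) is local, then for every k ≥ 1 the natural map I^k/𝔪I^k → A/𝔪A is injective, and consequently (I·(A/𝔪A))^k = image of I^k in A/𝔪A, i.e. the formation of the powers of I commutes with reduction modulo 𝔪. -/

import Mathlib

open TensorProduct LinearMap

/-- Flatness is closed under extensions. -/
lemma flat_of_exact' {R M N P : Type*} [CommRing R] [AddCommGroup M] [AddCommGroup N]
    [AddCommGroup P] [Module R M] [Module R N] [Module R P]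
    (f : N →ₗ[R] M) (g : M →ₗ[R] P) (hf : Function.Injective f)
    (hg : Function.Surjective g) (hfg : Function.Exact f g)
    (hN : Module.Flat R N) (hP : Module.Flat R P) : Module.Flat R M := by
  rw [Module.Flat.iff_rTensor_injective']
  intro J
  rw [injective_iff_map_eq_zero]
  intro x hx
  have sq1 : (rTensor P J.subtype).comp (lTensor (↥J) g)
      = (lTensor R g).comp (rTensor M J.subtype) := by
    ext a m; simp
  have h1 : (lTensor (↥J) g) x = 0 := by
    apply (Module.Flat.iff_rTensor_injective' (R := R) (M := P)).mp hP J
    rw [map_zero, ← LinearMap.comp_apply, sq1, LinearMap.comp_apply, hx, map_zero]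
  obtain ⟨y, rfl⟩ := ((lTensor_exact (↥J) hfg hg) x).mp h1
  have sq2 : (rTensor M J.subtype).comp (lTensor (↥J) f)
      = (lTensor R f).comp (rTensor N J.subtype) := by
    ext a n; simp
  have h2 : (lTensor R f) ((rTensor N J.subtype) y) = 0 := by
    rw [← LinearMap.comp_apply, ← sq2, LinearMap.comp_apply, hx]
  have hRf : Function.Injective (lTensor R f) :=
    Module.Flat.lTensor_preserves_injective_linearMap f hf
  have h3 : (rTensor N J.subtype) y = 0 := hRf (by rw [h2, map_zero])
  have h4 : y = 0 := (Module.Flat.iff_rTensor_injective' (R := R) (M := N)).mp hN J (by rw [h3, map_zero])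
  rw [h4, map_zero]

/-- If `M/N` is flat, then `N ∩ J•M ⊆ J•N` for every ideal `J` of `R`. -/
lemma inf_smul_le_of_flat {R M : Type*} [CommRing R] [AddCommGroup M] [Module R M]
    (N : Submodule R M) (hQ : Module.Flat R (M ⧸ N)) (J : Ideal R) :
    N ⊓ J • (⊤ : Submodule R M) ≤ J • N := by
  set μ : (↥J) ⊗[R] M →ₗ[R] M :=
    (TensorProduct.lid R M).toLinearMap.comp (rTensor M J.subtype) with hμ
  set μ' : (↥J) ⊗[R] (M ⧸ N) →ₗ[R] (M ⧸ N) :=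
    (TensorProduct.lid R (M ⧸ N)).toLinearMap.comp (rTensor (M ⧸ N) J.subtype) with hμ'
  have hμ'_inj : Function.Injective μ' := by
    refine (TensorProduct.lid R (M ⧸ N)).injective.comp ?_
    exact (Module.Flat.iff_rTensor_injective' (R := R) (M := M ⧸ N)).mp hQ J
  have sq : μ'.comp (lTensor (↥J) N.mkQ) = N.mkQ.comp μ := by
    ext a m; simp [hμ, hμ']
  rintro x ⟨hxN, hxJ⟩
  have hlift : ∃ t : (↥J) ⊗[R] M, μ t = x := by
    refine Submodule.smul_induction_on hxJ (fun r hr m _ => ⟨⟨r, hr⟩ ⊗ₜ m, by simp [hμ]⟩) ?_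
    rintro y z ⟨t, rfl⟩ ⟨s, rfl⟩
    exact ⟨t + s, by simp⟩
  obtain ⟨t, ht⟩ := hlift
  have h0 : μ' ((lTensor (↥J) N.mkQ) t) = 0 := by
    rw [← LinearMap.comp_apply, sq, LinearMap.comp_apply, ht]
    simpa [Submodule.Quotient.mk_eq_zero] using hxN
  have h1 : (lTensor (↥J) N.mkQ) t = 0 := hμ'_inj (by rw [h0, map_zero])
  obtain ⟨s, rfl⟩ := ((lTensor_exact (↥J) (LinearMap.exact_subtype_mkQ N)
    (Submodule.mkQ_surjective N)) t).mp h1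
  rw [← ht]
  clear ht h0 h1 hxN hxJ
  induction s using TensorProduct.induction_on with
  | zero => simp
  | tmul a n =>
    have : μ ((lTensor (↥J) N.subtype) (a ⊗ₜ n)) = (a : R) • (n : M) := by simp [hμ]
    rw [this]
    exact Submodule.smul_mem_smul a.2 n.2
  | add y z hy hz =>
    rw [map_add, map_add]
    exact Submodule.add_mem _ hy hz

/-- Let `A` be an `R`-algebra and `I ⊆ A` an ideal such that `A`, `A/I` and
the graded pieces `I^k/I^{k+1}` are flat over `R` for all `k ≥ 1`. Then
`A/I^k` is flat over `R` for all `k ≥ 1`. Moreover, if `R` is local with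
maximal ideal `𝔪`, then the natural map `I^k/𝔪I^k → A/𝔪A` is injective
(equivalently `I^k ∩ 𝔪A ⊆ 𝔪·I^k`), and consequently the image of `I` in
`A/𝔪A` satisfies `(I·(A/𝔪A))^k = image of I^k in A/𝔪A`. -/
theorem stmt_15 (R A : Type*) [CommRing R] [CommRing A] [Algebra R A]
    (I : Ideal A)
    (hA : Module.Flat R A)
    (hAI : Module.Flat R (A ⧸ (I.restrictScalars R)))
    (hgr : ∀ k : ℕ, 1 ≤ k → Module.Flat R
      (((I ^ k).restrictScalars R) ⧸
        (Submodule.comap ((I ^ k).restrictScalars R).subtype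
          ((I ^ (k+1)).restrictScalars R)))) :
    (∀ k : ℕ, 1 ≤ k → Module.Flat R (A ⧸ ((I ^ k).restrictScalars R))) ∧
    (∀ (hloc : IsLocalRing R), ∀ k : ℕ, 1 ≤ k →
      ((I ^ k).restrictScalars R ⊓
          ((@IsLocalRing.maximalIdeal R _ hloc) • (⊤ : Submodule R A)) ≤
        (@IsLocalRing.maximalIdeal R _ hloc) • ((I ^ k).restrictScalars R)) ∧
      ((Ideal.map (Ideal.Quotient.mk (Ideal.map (algebraMap R A)
          (@IsLocalRing.maximalIdeal R _ hloc))) I) ^ k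
        = Ideal.map (Ideal.Quotient.mk (Ideal.map (algebraMap R A)
          (@IsLocalRing.maximalIdeal R _ hloc))) (I ^ k))) := by
  have part1 : ∀ k : ℕ, 1 ≤ k → Module.Flat R (A ⧸ ((I ^ k).restrictScalars R)) := by
    intro k hk
    induction k, hk using Nat.le_induction with
    | base => rw [pow_one]; exact hAI
    | succ k hk ih =>
      set p := (I ^ k).restrictScalars R with hp
      set q := (I ^ (k+1)).restrictScalars R with hq
      have hle : q ≤ p := by
        intro x hx
        exact Ideal.pow_le_pow_right (by omega) hx
      set f : (p ⧸ (Submodule.comap p.subtype q)) →ₗ[R] (A ⧸ q) :=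
        Submodule.liftQ _ (q.mkQ.comp p.subtype)
          (by rw [LinearMap.ker_comp, Submodule.ker_mkQ]) with hf
      set g : (A ⧸ q) →ₗ[R] (A ⧸ p) :=
        Submodule.mapQ q p LinearMap.id (fun x hx => hle hx) with hg
      have hfinj : Function.Injective f := by
        rw [← LinearMap.ker_eq_bot, hf]
        apply Submodule.ker_liftQ_eq_bot
        rw [LinearMap.ker_comp, Submodule.ker_mkQ]
      have hgsurj : Function.Surjective g := by
        intro y
        obtain ⟨a, rfl⟩ := Submodule.mkQ_surjective p y
        exact ⟨q.mkQ a, rfl⟩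
      have hfg : Function.Exact f g := by
        intro y
        obtain ⟨a, rfl⟩ := Submodule.mkQ_surjective q y
        constructor
        · intro h
          have ha : a ∈ p := by
            have : g (q.mkQ a) = p.mkQ a := rfl
            rw [this] at h
            simpa [Submodule.Quotient.mk_eq_zero] using h
          exact ⟨Submodule.Quotient.mk ⟨a, ha⟩, rfl⟩
        · rintro ⟨c, hc⟩
          rw [← hc]
          obtain ⟨b, rfl⟩ := Submodule.mkQ_surjective _ c
          show g (f (Submodule.Quotient.mk b)) = 0
          have hfb : f (Submodule.Quotient.mk b) = q.mkQ (b : A) := rfl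
          rw [hfb]
          have : g (q.mkQ (b : A)) = p.mkQ (b : A) := rfl
          rw [this]
          simpa [Submodule.Quotient.mk_eq_zero] using b.2
      exact flat_of_exact' f g hfinj hgsurj hfg (hgr k hk) ih
  refine ⟨part1, fun hloc k hk => ⟨?_, ?_⟩⟩
  · exact inf_smul_le_of_flat _ (part1 k hk) _
  · exact (Ideal.map_pow _ _ _).symm
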